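/- A group of order 48 generated by subgroups isomorphic to D3 and D2 intersecting in Z/2Z has exactly four Sylow 3-subgroups. -/

import Mathlib

open Subgroup

lemma d3_aux1 : ∀ a : DihedralGroup 3, a * a = 1 ∨ a * a * a = 1 := by decide

lemma d3_aux2 : ∀ a b : DihedralGroup 3, a ≠ 1 → b ≠ 1 → a * a = 1 → b * b = 1 →
    a * b = 1 ∨ (a * b) * (a * b) * (a * b) = 1 := by decide

lemma d3_aux3 : ∀ a : DihedralGroup 3, a ≠ 1 → a * a = 1 →
    ∃ b, b * b = 1 ∧ a * b ≠ 1 ∧ (a * b) * (a * b) * (a * b) = 1 := by decide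

theorem order_48_gen_by_D3_D2_four_sylow3 (G : Type*) [Group G] [Finite G]
    (hG : Nat.card G = 48) (U V : Subgroup G)
    (hU : Nonempty (U ≃* DihedralGroup 3))
    (hV : Nonempty (V ≃* DihedralGroup 2))
    (hUV : Nonempty ((↥(U ⊓ V)) ≃* Multiplicative (ZMod 2)))
    (hgen : U ⊔ V = ⊤) :
    Nat.card (Sylow 3 G) = 4 := by
  haveI : Fact (Nat.Prime 3) := ⟨by norm_num⟩
  obtain ⟨eU⟩ := hU
  obtain ⟨eV⟩ := hV
  obtain ⟨eUV⟩ := hUV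
  obtain ⟨P⟩ : Nonempty (Sylow 3 G) := inferInstance
  -- basic cardinalities
  have hcardP : Nat.card (P : Subgroup G) = 3 := by
    rw [P.card_eq_multiplicity, hG]
    rw [show (48:ℕ) = 2^4 * 3 by norm_num, Nat.factorization_mul (by norm_num) (by norm_num),
      Nat.Prime.factorization_pow Nat.prime_two, Nat.Prime.factorization Nat.prime_three]
    simp
  have hindexP : (P : Subgroup G).index = 16 := by
    have h := Subgroup.card_mul_index (P : Subgroup G)
    rw [hcardP, hG] at h
    omega
  have hUVcard : Nat.card ↥(U ⊓ V) = 2 := by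
    rw [Nat.card_congr eUV.toEquiv]
    simp [Nat.card_eq_fintype_card]
  -- the involution t in U ⊓ V
  haveI : Nontrivial ↥(U ⊓ V) := Finite.one_lt_card_iff_nontrivial.mp (by omega)
  obtain ⟨t', ht'⟩ := exists_ne (1 : ↥(U ⊓ V))
  have htUV : (t' : G) ∈ U ⊓ V := t'.2
  have ht1 : (t' : G) ≠ 1 := fun h => ht' (Subtype.ext h)
  have ht2 : (t' : G) * (t' : G) = 1 := by
    have h : t' * t' = 1 := by
      have := pow_card_eq_one' (G := ↥(U ⊓ V)) (x := t')
      rw [hUVcard, pow_two] at this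
      exact this
    simpa using congrArg (Subtype.val) h
  set t : G := (t' : G) with htdef
  have htU : t ∈ U := htUV.1
  have htV : t ∈ V := htUV.2
  -- t as element of U, and its image a in DihedralGroup 3
  have htU2 : (⟨t, htU⟩ : U) * ⟨t, htU⟩ = 1 := Subtype.ext ht2
  have ha2 : eU ⟨t, htU⟩ * eU ⟨t, htU⟩ = 1 := by rw [← map_mul, htU2, map_one]
  have ha1 : eU ⟨t, htU⟩ ≠ 1 := by
    intro h
    exact ht1 (congrArg Subtype.val (eU.injective (h.trans (map_one eU).symm)))
  -- possible values of the number of Sylow 3-subgroups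
  have hdvd : Nat.card (Sylow 3 G) ∣ 16 := hindexP ▸ P.card_dvd_index
  have hmod : Nat.card (Sylow 3 G) % 3 = 1 := card_sylow_modEq_one 3 G
  have hdvd' : Nat.card (Sylow 3 G) ∣ 2 ^ 4 := by norm_num; exact hdvd
  obtain ⟨k, hk, hn⟩ := (Nat.dvd_prime_pow Nat.prime_two).mp hdvd'
  have hcases : Nat.card (Sylow 3 G) = 1 ∨ Nat.card (Sylow 3 G) = 4 ∨ Nat.card (Sylow 3 G) = 16 := by
    interval_cases k <;> norm_num at hn <;> omega
  rcases hcases with h1 | h4 | h16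
  · -- case 1: unique Sylow 3-subgroup, contradiction
    exfalso
    haveI hsub : Subsingleton (Sylow 3 G) := (Nat.card_eq_one_iff_unique.mp h1).1
    haveI hPnormal : (P : Subgroup G).Normal := by
      have h := P.card_eq_index_normalizer
      rw [h1] at h
      exact normalizer_eq_top_iff.mp (Subgroup.index_eq_one.mp h.symm)
    have hmem3 : ∀ g : G, g * g * g = 1 → g ∈ (P : Subgroup G) := by
      intro g hg
      have horder : orderOf g ∣ 3 := orderOf_dvd_of_pow_eq_one (by rw [pow_succ, pow_two]; exact hg)
      have hpg : IsPGroup 3 (zpowers g) := by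
        rw [IsPGroup.iff_card (p := 3)]
        rcases Nat.Prime.eq_one_or_self_of_dvd Nat.prime_three _ horder with h | h
        · exact ⟨0, by rw [Nat.card_zpowers, h]; rfl⟩
        · exact ⟨1, by rw [Nat.card_zpowers, h]; rfl⟩
      obtain ⟨Q, hQ⟩ := hpg.exists_le_sylow
      have hQP : Q = P := Subsingleton.elim _ _
      exact hQP ▸ hQ (mem_zpowers g)
    have hUle : U ≤ (P : Subgroup G) ⊔ V := by
      intro u hu
      rcases d3_aux1 (eU ⟨u, hu⟩) with h | h
      · -- u is an involution (or 1)
        by_cases hu1 : u = 1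
        · rw [hu1]; exact one_mem _
        have huu : u * u = 1 := by
          have := eU.injective (by rw [map_mul, h, map_one] : eU (⟨u, hu⟩ * ⟨u, hu⟩) = eU 1)
          simpa using congrArg Subtype.val this
        have hune : eU ⟨u, hu⟩ ≠ 1 := by
          intro hh
          exact hu1 (congrArg Subtype.val (eU.injective (hh.trans (map_one eU).symm)))
        have huu' : eU ⟨u, hu⟩ * eU ⟨u, hu⟩ = 1 := by
          rw [← map_mul]
          rw [show (⟨u, hu⟩ : U) * ⟨u, hu⟩ = 1 from Subtype.ext huu, map_one]
        have hw3 : (u * t) * (u * t) * (u * t) = 1 := by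
          rcases d3_aux2 (eU ⟨u, hu⟩) (eU ⟨t, htU⟩) hune ha1 huu' ha2 with hc | hc
          · have : (⟨u, hu⟩ : U) * ⟨t, htU⟩ = 1 := eU.injective (by rw [map_mul]; simpa using hc)
            have : u * t = 1 := by simpa using congrArg Subtype.val this
            rw [this]; group
          · rw [← map_mul, ← map_mul, ← map_mul] at hc
            have := eU.injective (hc.trans (map_one eU).symm)
            simpa using congrArg Subtype.val this
        have hwP : u * t ∈ (P : Subgroup G) := hmem3 _ hw3
        have : u = (u * t) * t⁻¹ := by group
        rw [this]
        exact mul_mem (mem_sup_left hwP) (mem_sup_right (inv_mem htV))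
      · -- u has order dividing 3
        have huuu : u * u * u = 1 := by
          rw [← map_mul, ← map_mul] at h
          have := eU.injective (h.trans (map_one eU).symm)
          simpa using congrArg Subtype.val this
        exact mem_sup_left (hmem3 u huuu)
    have htop : (P : Subgroup G) ⊔ V = ⊤ := by
      rw [← top_le_iff, ← hgen]
      exact sup_le hUle le_sup_right
    -- quotient by P
    set f := QuotientGroup.mk' (P : Subgroup G) with hf
    have hmap : Subgroup.map f V = ⊤ := by
      have hmt : Subgroup.map f ((P : Subgroup G) ⊔ V) = ⊤ := by
        rw [htop]
        exact Subgroup.map_top_of_surjective f (QuotientGroup.mk'_surjective _)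
      rwa [Subgroup.map_sup, (Subgroup.map_eq_bot_iff _).mpr
        (le_of_eq (QuotientGroup.ker_mk' _).symm), bot_sup_eq] at hmt
    have hsurj : Function.Surjective
        (fun v : V => (⟨f v, Subgroup.mem_map_of_mem f v.2⟩ : Subgroup.map f V)) := by
      rintro ⟨x, hx⟩
      obtain ⟨v, hv, rfl⟩ := hx
      exact ⟨⟨v, hv⟩, rfl⟩
    have hcV : Nat.card V = 4 := by
      rw [Nat.card_congr eV.toEquiv]
      simp [Nat.card_eq_fintype_card, DihedralGroup.card]
    have hle : Nat.card (G ⧸ (P : Subgroup G)) ≤ 4 := by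
      calc Nat.card (G ⧸ (P : Subgroup G)) = Nat.card (Subgroup.map f V) := by
            rw [hmap]; exact (Nat.card_congr Subgroup.topEquiv.toEquiv).symm
        _ ≤ Nat.card V := Nat.card_le_card_of_surjective _ hsurj
        _ = 4 := hcV
    have : (P : Subgroup G).index = Nat.card (G ⧸ (P : Subgroup G)) := rfl
    omega
  · exact h4
  · -- case 16: self-normalizing Sylow, Burnside transfer, contradiction
    exfalso
    have hidxN : (normalizer ((P : Subgroup G) : Set G)).index = 16 := by
      exact P.card_eq_index_normalizer.symm.trans h16
    have hcN : Nat.card (normalizer ((P : Subgroup G) : Set G)) = 3 := by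
      have h := Subgroup.card_mul_index (normalizer ((P : Subgroup G) : Set G))
      rw [hidxN, hG] at h
      omega
    have hnorm : (normalizer ((P : Subgroup G) : Set G)) = P := by
      exact (Subgroup.eq_of_le_of_card_ge le_normalizer (by rw [hcN, hcardP])).symm
    haveI : IsCyclic ↥(P : Subgroup G) := isCyclic_of_prime_card (p := 3) hcardP
    letI : CommGroup ↥(P : Subgroup G) := IsCyclic.commGroup
    haveI hPcomm : IsMulCommutative ↥(P : Subgroup G) := ⟨⟨fun a b => mul_comm a b⟩⟩
    have hP : (normalizer ((P : Subgroup G) : Set G)) ≤ Subgroup.centralizer ((P : Subgroup G) : Set G) := by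
      rw [hnorm]
      exact Subgroup.le_centralizer _
    set Q := (MonoidHom.transferSylow P hP).ker with hQ
    have hcompl := MonoidHom.ker_transferSylow_isComplement' P hP
    have hcardQ : Nat.card Q = 16 := by
      have h : Nat.card Q * Nat.card ↥(P : Subgroup G) = Nat.card G := hcompl.card_mul
      rw [hcardP, hG] at h
      omega
    have hker2 : ∀ g : G, g * g = 1 → g ∈ Q := by
      intro g hg
      have hy2 : (MonoidHom.transferSylow P hP) g ^ 2 = 1 := by
        rw [pow_two, ← map_mul, hg, map_one]
      have hy3 : (MonoidHom.transferSylow P hP) g ^ 3 = 1 := by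
        have := pow_card_eq_one' (x := (MonoidHom.transferSylow P hP) g)
        rwa [hcardP] at this
      have hgcd : orderOf ((MonoidHom.transferSylow P hP) g) ∣ Nat.gcd 2 3 :=
        Nat.dvd_gcd (orderOf_dvd_of_pow_eq_one hy2) (orderOf_dvd_of_pow_eq_one hy3)
      norm_num at hgcd
      exact MonoidHom.mem_ker.mpr hgcd
    -- build an element of order 3 inside Q
    obtain ⟨b, hb2, hab1, hab3⟩ := d3_aux3 (eU ⟨t, htU⟩) ha1 ha2
    set u : G := ((eU.symm b : U) : G) with hu
    have huU : u ∈ U := (eU.symm b).2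
    have hu2 : u * u = 1 := by
      have : (eU.symm b) * (eU.symm b) = 1 := by
        apply eU.injective
        rw [map_mul, MulEquiv.apply_symm_apply, hb2, map_one]
      simpa using congrArg Subtype.val this
    have htu : eU ⟨t, htU⟩ * b = eU (⟨t, htU⟩ * eU.symm b) := by
      rw [map_mul, MulEquiv.apply_symm_apply]
    have hx1 : t * u ≠ 1 := by
      intro hh
      apply hab1
      rw [htu]
      have : (⟨t, htU⟩ : U) * eU.symm b = 1 := Subtype.ext (by simpa using hh)
      rw [this, map_one]
    have hx3 : (t * u) * (t * u) * (t * u) = 1 := by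
      rw [htu, ← map_mul, ← map_mul] at hab3
      have := eU.injective (hab3.trans (map_one eU).symm)
      simpa using congrArg Subtype.val this
    have hxQ : t * u ∈ Q := mul_mem (hker2 t ht2) (hker2 u hu2)
    have hord : orderOf (t * u) = 3 := by
      have hdvd3 : orderOf (t * u) ∣ 3 :=
        orderOf_dvd_of_pow_eq_one (by rw [pow_succ, pow_two]; exact hx3)
      rcases Nat.Prime.eq_one_or_self_of_dvd Nat.prime_three _ hdvd3 with h | h
      · exact absurd (orderOf_eq_one_iff.mp h) hx1
      · exact h
    have h3Q : (3 : ℕ) ∣ Nat.card Q := by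
      have h := orderOf_dvd_natCard (⟨t * u, hxQ⟩ : Q)
      rwa [Subgroup.orderOf_mk, hord] at h
    rw [hcardQ] at h3Q
    norm_num at h3Q
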